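/- Let l, m, and n be positive integers with m ≤ l ≤ n. Let A be a real m×n matrix of rank m admitting the singular value decomposition A = U Σ Vᵀ, where U is an m×m matrix with orthonormal columns, V is an n×m matrix with orthonormal columns, and Σ is an m×m diagonal matrix with nonnegative entries. Let G be a real n×l matrix such that the m×l matrix A G has rank m, and suppose P is a real m×m matrix and Q is a real l×m matrix with orthonormal columns such that A G = P Qᵀ. Then P is invertible, and the condition number of P⁻¹ A equals the condition number of Vᵀ G. -/

import Mathlib

open Matrix

/-- The Euclidean norm of a vector in `ℝᵏ`. -/
noncomputable def euclNorm {k : ℕ} (v : Fin k → ℝ) : ℝ :=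
  Real.sqrt (∑ i, v i ^ 2)

/-- The greatest singular value of a real `m × k` matrix `M` (`m ≤ k`):
`sup {‖Mᵀ y‖ : y ∈ ℝᵐ, ‖y‖ = 1}`. -/
noncomputable def sigmaMax {m k : ℕ} (M : Matrix (Fin m) (Fin k) ℝ) : ℝ :=
  sSup {x | ∃ y : Fin m → ℝ, euclNorm y = 1 ∧ x = euclNorm (Mᵀ.mulVec y)}

/-- The least (`m`-th greatest) singular value of a real `m × k` matrix `M`
(`m ≤ k`): `inf {‖Mᵀ y‖ : y ∈ ℝᵐ, ‖y‖ = 1}`. -/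
noncomputable def sigmaMin {m k : ℕ} (M : Matrix (Fin m) (Fin k) ℝ) : ℝ :=
  sInf {x | ∃ y : Fin m → ℝ, euclNorm y = 1 ∧ x = euclNorm (Mᵀ.mulVec y)}

/-- The condition number of a real `m × k` matrix (`m ≤ k`): the ratio of its
greatest singular value to its least singular value. -/
noncomputable def condNum {m k : ℕ} (M : Matrix (Fin m) (Fin k) ℝ) : ℝ :=
  sigmaMax M / sigmaMin M

/-! ### Auxiliary lemmas -/

/-- The set of values `‖Mᵀ y‖` over unit vectors `y`. -/
def svalSet {m k : ℕ} (M : Matrix (Fin m) (Fin k) ℝ) : Set ℝ :=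
  {x | ∃ y : Fin m → ℝ, euclNorm y = 1 ∧ x = euclNorm (Mᵀ.mulVec y)}

lemma sigmaMax_eq {m k : ℕ} (M : Matrix (Fin m) (Fin k) ℝ) :
    sigmaMax M = sSup (svalSet M) := rfl

lemma sigmaMin_eq {m k : ℕ} (M : Matrix (Fin m) (Fin k) ℝ) :
    sigmaMin M = sInf (svalSet M) := rfl

lemma condNum_congr {m k k' : ℕ} {M : Matrix (Fin m) (Fin k) ℝ}
    {N : Matrix (Fin m) (Fin k') ℝ} (h : svalSet M = svalSet N) :
    condNum M = condNum N := by
  unfold condNum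
  rw [sigmaMax_eq, sigmaMin_eq, sigmaMax_eq, sigmaMin_eq, h]

lemma euclNorm_nonneg {k : ℕ} (v : Fin k → ℝ) : 0 ≤ euclNorm v := Real.sqrt_nonneg _

lemma euclNorm_eq_zero {k : ℕ} (v : Fin k → ℝ) : euclNorm v = 0 ↔ v = 0 := by
  unfold euclNorm
  rw [Real.sqrt_eq_zero (by positivity)]
  constructor
  · intro h
    funext i
    have := (Finset.sum_eq_zero_iff_of_nonneg (fun i _ => sq_nonneg (v i))).mp h i
      (Finset.mem_univ i)
    exact pow_eq_zero_iff (by norm_num) |>.mp this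
  · rintro rfl; simp

lemma euclNorm_smul {k : ℕ} (c : ℝ) (v : Fin k → ℝ) :
    euclNorm (c • v) = |c| * euclNorm v := by
  unfold euclNorm
  rw [← Real.sqrt_sq_eq_abs, ← Real.sqrt_mul (sq_nonneg c), Finset.mul_sum]
  congr 1
  exact Finset.sum_congr rfl (fun i _ => by simp [mul_pow])

/-- Multiplication by a matrix with orthonormal columns preserves the norm. -/
lemma orth_norm {k m : ℕ} (W : Matrix (Fin k) (Fin m) ℝ) (hW : Wᵀ * W = 1)
    (x : Fin m → ℝ) : euclNorm (W.mulVec x) = euclNorm x := by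
  have h : (W.mulVec x) ⬝ᵥ (W.mulVec x) = x ⬝ᵥ x := by
    rw [dotProduct_mulVec, ← mulVec_transpose, mulVec_mulVec, hW, one_mulVec]
  simp only [euclNorm]
  congr 1
  simpa [dotProduct, sq] using h

/-- A square matrix of full rank is invertible. -/
lemma rank_isUnit {m : ℕ} (P : Matrix (Fin m) (Fin m) ℝ) (h : P.rank = m) :
    IsUnit P := by
  rw [← mulVec_surjective_iff_isUnit]
  have htop : LinearMap.range P.mulVecLin = ⊤ := by
    apply Submodule.eq_top_of_finrank_eq
    rw [← Matrix.rank, h]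
    simp
  intro y
  have := LinearMap.range_eq_top.mp htop y
  simpa using this

lemma svalSet_nonempty {m k : ℕ} (hm : 0 < m) (M : Matrix (Fin m) (Fin k) ℝ) :
    (svalSet M).Nonempty := by
  have i0 : Fin m := ⟨0, hm⟩
  refine ⟨_, Pi.single i0 1, ?_, rfl⟩
  unfold euclNorm
  have : (∑ i, (Pi.single i0 1 : Fin m → ℝ) i ^ 2) = 1 := by
    rw [Finset.sum_eq_single i0] <;> simp +contextual [Pi.single_apply]
  rw [this, Real.sqrt_one]

lemma svalSet_compact {m k : ℕ} (M : Matrix (Fin m) (Fin k) ℝ) :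
    IsCompact (svalSet M) := by
  have hset : svalSet M = (fun y => euclNorm (Mᵀ.mulVec y)) '' {y | euclNorm y = 1} := by
    ext x; simp [svalSet, Set.mem_image, eq_comm]
  rw [hset]
  apply IsCompact.image
  · have hb : Bornology.IsBounded {y : Fin m → ℝ | euclNorm y = 1} := by
      rw [Metric.isBounded_iff_subset_closedBall 0]
      use 1
      intro y hy
      simp only [Set.mem_setOf_eq] at hy
      simp only [Metric.mem_closedBall, dist_zero_right]
      rw [pi_norm_le_iff_of_nonneg zero_le_one]
      intro i
      rw [Real.norm_eq_abs, ← Real.sqrt_sq_eq_abs, ← hy]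
      unfold euclNorm
      apply Real.sqrt_le_sqrt
      exact Finset.single_le_sum (f := fun i => y i ^ 2) (fun i _ => sq_nonneg _)
        (Finset.mem_univ i)
    have hc : IsClosed {y : Fin m → ℝ | euclNorm y = 1} :=
      isClosed_eq (by unfold euclNorm; fun_prop) continuous_const
    exact Metric.isCompact_of_isClosed_isBounded hc hb
  · exact (by unfold euclNorm; fun_prop : Continuous (euclNorm (k := k))).comp
      (Continuous.matrix_mulVec continuous_const continuous_id)

lemma svalSet_pos {m : ℕ} (B : Matrix (Fin m) (Fin m) ℝ) (hB : IsUnit B)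
    {x : ℝ} (hx : x ∈ svalSet B) : 0 < x := by
  obtain ⟨y, hy, rfl⟩ := hx
  rcases (euclNorm_nonneg (Bᵀ.mulVec y)).lt_or_eq with h | h
  · exact h
  exfalso
  have hz : Bᵀ.mulVec y = 0 := (euclNorm_eq_zero _).mp h.symm
  have hy0 : y ≠ 0 := by
    intro h0; rw [h0, (euclNorm_eq_zero 0).mpr rfl] at hy; norm_num at hy
  have hinj : Function.Injective (Bᵀ.mulVec) :=
    mulVec_injective_iff_isUnit.mpr ((isUnit_iff_isUnit_det _).mpr
      (isUnit_det_transpose _ ((isUnit_iff_isUnit_det _).mp hB)))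
  exact hy0 (hinj (by simpa using hz))

lemma svalSet_inv_subset {m : ℕ} (B : Matrix (Fin m) (Fin m) ℝ) (hB : IsUnit B) :
    (fun x => x⁻¹) '' svalSet B ⊆ svalSet B⁻¹ := by
  rintro _ ⟨x, ⟨y, hy, rfl⟩, rfl⟩
  set z := Bᵀ.mulVec y with hz
  have hc : 0 < euclNorm z := svalSet_pos B hB ⟨y, hy, rfl⟩
  refine ⟨(euclNorm z)⁻¹ • z, ?_, ?_⟩
  · rw [euclNorm_smul, abs_of_pos (inv_pos.mpr hc), inv_mul_cancel₀ hc.ne']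
  · have hBt : IsUnit Bᵀ.det := by
      rw [det_transpose]; exact (isUnit_iff_isUnit_det _).mp hB
    have h2 : (B⁻¹)ᵀ.mulVec ((euclNorm z)⁻¹ • z) = (euclNorm z)⁻¹ • y := by
      rw [mulVec_smul, transpose_nonsing_inv, hz, mulVec_mulVec, nonsing_inv_mul _ hBt,
        one_mulVec]
    rw [h2, euclNorm_smul, abs_of_pos (inv_pos.mpr hc), hy, mul_one]

lemma svalSet_inv {m : ℕ} (B : Matrix (Fin m) (Fin m) ℝ) (hB : IsUnit B) :
    svalSet B⁻¹ = (fun x => x⁻¹) '' svalSet B := by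
  apply Set.Subset.antisymm
  · intro x hx
    have hUI : IsUnit B⁻¹ := (isUnit_iff_isUnit_det _).mpr
      (isUnit_nonsing_inv_det _ ((isUnit_iff_isUnit_det _).mp hB))
    have h2 : x⁻¹ ∈ svalSet B⁻¹⁻¹ := svalSet_inv_subset B⁻¹ hUI ⟨x, hx, rfl⟩
    rw [nonsing_inv_nonsing_inv _ ((isUnit_iff_isUnit_det _).mp hB)] at h2
    exact ⟨x⁻¹, h2, by simp⟩
  · exact svalSet_inv_subset B hB

lemma sSup_inv_image {S : Set ℝ} (hne : S.Nonempty) (hc : IsCompact S)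
    (hpos : ∀ x ∈ S, 0 < x) :
    sSup ((fun x => x⁻¹) '' S) = (sInf S)⁻¹ := by
  have ha : sInf S ∈ S := hc.sInf_mem hne
  have hap := hpos _ ha
  have hub : ∀ z ∈ (fun x => x⁻¹) '' S, z ≤ (sInf S)⁻¹ := by
    rintro _ ⟨x, hx, rfl⟩
    exact inv_anti₀ hap (csInf_le hc.bddBelow hx)
  exact le_antisymm (csSup_le (hne.image _) hub) (le_csSup ⟨_, hub⟩ ⟨_, ha, rfl⟩)

lemma sInf_inv_image {S : Set ℝ} (hne : S.Nonempty) (hc : IsCompact S)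
    (hpos : ∀ x ∈ S, 0 < x) :
    sInf ((fun x => x⁻¹) '' S) = (sSup S)⁻¹ := by
  have hb : sSup S ∈ S := hc.sSup_mem hne
  apply le_antisymm
  · exact csInf_le ⟨0, by rintro _ ⟨x, hx, rfl⟩; exact inv_nonneg.mpr (hpos x hx).le⟩
      ⟨_, hb, rfl⟩
  · refine le_csInf (hne.image _) ?_
    rintro _ ⟨x, hx, rfl⟩
    exact inv_anti₀ (hpos x hx) (le_csSup hc.bddAbove hx)

/-- The condition number of the inverse of an invertible square matrix equals the
condition number of the matrix itself. -/
lemma condNum_inv {m : ℕ} (hm : 0 < m) (B : Matrix (Fin m) (Fin m) ℝ)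
    (hB : IsUnit B) : condNum B⁻¹ = condNum B := by
  have hc := svalSet_compact B
  have hne := svalSet_nonempty hm B
  have hpos : ∀ x ∈ svalSet B, 0 < x := fun x hx => svalSet_pos B hB hx
  have h1 : sigmaMax B⁻¹ = (sigmaMin B)⁻¹ := by
    rw [sigmaMax_eq, sigmaMin_eq, svalSet_inv B hB]
    exact sSup_inv_image hne hc hpos
  have h2 : sigmaMin B⁻¹ = (sigmaMax B)⁻¹ := by
    rw [sigmaMin_eq, sigmaMax_eq, svalSet_inv B hB]
    exact sInf_inv_image hne hc hpos
  unfold condNum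
  rw [h1, h2, div_eq_mul_inv, inv_inv, mul_comm, ← div_eq_mul_inv]

/-- Right multiplication by the transpose of a matrix with orthonormal columns
does not change the singular values. -/
lemma svalSet_mul_orth {m k : ℕ} (B : Matrix (Fin m) (Fin m) ℝ)
    (W : Matrix (Fin k) (Fin m) ℝ) (hW : Wᵀ * W = 1) :
    svalSet (B * Wᵀ) = svalSet B := by
  have key : ∀ y, euclNorm ((B * Wᵀ)ᵀ.mulVec y) = euclNorm (Bᵀ.mulVec y) := by
    intro y
    rw [transpose_mul, transpose_transpose, ← mulVec_mulVec, orth_norm W hW]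
  unfold svalSet
  ext x
  simp only [Set.mem_setOf_eq, key]

/-- Let `A = U Σ Vᵀ` be an SVD of a full-rank real `m × n` matrix
(`0 < m ≤ l ≤ n`), and let `G` be a real `n × l` matrix with `A * G` of rank
`m`.  If `A * G = P * Qᵀ` with `Q` having orthonormal columns, then `P` is
invertible and the condition number of `P⁻¹ * A` equals that of `Vᵀ * G`. -/
theorem stmt_8 (l m n : ℕ) (hm : 0 < m) (hml : m ≤ l) (hln : l ≤ n)
    (A : Matrix (Fin m) (Fin n) ℝ) (hrank : A.rank = m)
    (U : Matrix (Fin m) (Fin m) ℝ) (hU : Uᵀ * U = 1)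
    (S : Matrix (Fin m) (Fin m) ℝ) (hSdiag : ∀ i j, i ≠ j → S i j = 0)
    (hSpos : ∀ i, 0 ≤ S i i)
    (V : Matrix (Fin n) (Fin m) ℝ) (hV : Vᵀ * V = 1)
    (hSVD : A = U * S * Vᵀ)
    (G : Matrix (Fin n) (Fin l) ℝ) (hAG : (A * G).rank = m)
    (P : Matrix (Fin m) (Fin m) ℝ) (Q : Matrix (Fin l) (Fin m) ℝ)
    (hQ : Qᵀ * Q = 1) (hPQ : A * G = P * Qᵀ) :
    IsUnit P ∧ condNum (P⁻¹ * A) = condNum (Vᵀ * G) := by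
  -- U is invertible
  have hUdet : IsUnit U.det := by
    have h1 : U.det * U.det = 1 := by
      have := congrArg Matrix.det hU
      rwa [det_mul, det_transpose, det_one] at this
    exact IsUnit.of_mul_eq_one _ h1
  have hUunit : IsUnit U := (isUnit_iff_isUnit_det _).mpr hUdet
  -- P is invertible
  have hPrank : P.rank = m := by
    apply le_antisymm
    · have hP : (A * G) * Q = P := by
        rw [hPQ, Matrix.mul_assoc, hQ, Matrix.mul_one]
      calc P.rank = ((A * G) * Q).rank := by rw [hP]
        _ ≤ (A * G).rank := rank_mul_le_left _ _
        _ = m := hAG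
    · calc m = (A * G).rank := hAG.symm
        _ = (P * Qᵀ).rank := by rw [hPQ]
        _ ≤ P.rank := rank_mul_le_left _ _
  have hPunit : IsUnit P := rank_isUnit P hPrank
  have hPdet : IsUnit P.det := (isUnit_iff_isUnit_det _).mp hPunit
  refine ⟨hPunit, ?_⟩
  -- S is invertible
  have hSrank : S.rank = m := by
    apply le_antisymm (by simpa using rank_le_width S)
    have h1 : (U * (S * Vᵀ)).rank = (S * Vᵀ).rank :=
      rank_mul_eq_right_of_isUnit_det U _ hUdet
    have h2 : (S * Vᵀ).rank = m := by
      rw [← h1, ← Matrix.mul_assoc, ← hSVD, hrank]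
    calc m = (S * Vᵀ).rank := h2.symm
      _ ≤ S.rank := rank_mul_le_left _ _
  have hSunit : IsUnit S := rank_isUnit S hSrank
  have hSdet : IsUnit S.det := (isUnit_iff_isUnit_det _).mp hSunit
  -- the key matrix B
  set B := P⁻¹ * U * S with hB
  have hPinv : IsUnit P⁻¹ := (isUnit_iff_isUnit_det _).mpr (isUnit_nonsing_inv_det _ hPdet)
  have hBunit : IsUnit B := (hPinv.mul hUunit).mul hSunit
  -- B⁻¹ = S⁻¹ * Uᵀ * P
  have hBinv : B⁻¹ = S⁻¹ * Uᵀ * P := by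
    have hUinv : U⁻¹ = Uᵀ := inv_eq_left_inv hU
    rw [hB, Matrix.mul_inv_rev, Matrix.mul_inv_rev, hUinv,
      nonsing_inv_nonsing_inv _ hPdet, ← Matrix.mul_assoc]
  -- P⁻¹ * A = B * Vᵀ
  have hPA : P⁻¹ * A = B * Vᵀ := by
    rw [hSVD, hB]
    simp only [Matrix.mul_assoc]
  -- Vᵀ * G = B⁻¹ * Qᵀ
  have hVG : Vᵀ * G = B⁻¹ * Qᵀ := by
    rw [hBinv]
    have key : S * (Vᵀ * G) = Uᵀ * (P * Qᵀ) := by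
      rw [← hPQ, hSVD]
      calc S * (Vᵀ * G) = (Uᵀ * U) * (S * (Vᵀ * G)) := by rw [hU, Matrix.one_mul]
        _ = Uᵀ * (U * S * Vᵀ * G) := by simp only [Matrix.mul_assoc]
    calc Vᵀ * G = S⁻¹ * (S * (Vᵀ * G)) := by
          rw [← Matrix.mul_assoc, nonsing_inv_mul _ hSdet, Matrix.one_mul]
      _ = S⁻¹ * (Uᵀ * (P * Qᵀ)) := by rw [key]
      _ = S⁻¹ * Uᵀ * P * Qᵀ := by simp only [Matrix.mul_assoc]
  -- assemble
  calc condNum (P⁻¹ * A) = condNum (B * Vᵀ) := by rw [hPA]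
    _ = condNum B := condNum_congr (svalSet_mul_orth B V hV)
    _ = condNum B⁻¹ := (condNum_inv hm B hBunit).symm
    _ = condNum (B⁻¹ * Qᵀ) := (condNum_congr (svalSet_mul_orth B⁻¹ Q hQ)).symm
    _ = condNum (Vᵀ * G) := by rw [hVG]
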